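/- arXiv:1009.4321 — 6 statements merged into one kernel-verified Lean document; each statement's English description precedes it below -/
import Mathlib

section
/- The set of primitive pairs (u,v) is finite; that is, the Graver basis of A is finite. -/
/-- A pair `(u,v)` with `u, v ∈ ℕ^n`, `u ≠ v` and `A u = A v` is primitive (the binomial
`x^u − x^v` is a Graver binomial) if there is no pair `(u',v') ≠ (u,v)` with `u' ≤ u` and
`v' ≤ v` componentwise, `u' ≠ v'`, and `A u' = A v'`. -/
def IsPrimitivePair (n d : ℕ) (a : Fin n → Fin d → ℤ) (u v : Fin n → ℕ) : Prop :=
  u ≠ v ∧ (∑ i, (u i : ℤ) • a i) = (∑ i, (v i : ℤ) • a i) ∧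
    ¬ ∃ u' v' : Fin n → ℕ, (u', v') ≠ (u, v) ∧ u' ≤ u ∧ v' ≤ v ∧ u' ≠ v' ∧
      (∑ i, (u' i : ℤ) • a i) = (∑ i, (v' i : ℤ) • a i)

/-- The set of primitive pairs is finite; that is, the Graver basis of `A` is finite. -/
theorem graverBasis_finite (n d : ℕ) (a : Fin n → Fin d → ℤ) :
    {p : (Fin n → ℕ) × (Fin n → ℕ) | IsPrimitivePair n d a p.1 p.2}.Finite := by
  set S := {p : (Fin n → ℕ) × (Fin n → ℕ) | IsPrimitivePair n d a p.1 p.2}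
  have hanti : IsAntichain (· ≤ ·) S := by
    intro p hp q hq hne hle
    obtain ⟨hne', heq', hprim'⟩ := hq
    exact hprim' ⟨p.1, p.2, by simpa using hne, hle.1, hle.2, hp.1, hp.2.1⟩
  have huniv : (Set.univ : Set (Fin n → ℕ)).IsPWO := by
    have h : (Set.univ : Set (Fin n →₀ ℕ)).IsPWO := Set.isPWO_of_wellQuasiOrderedLE Set.univ
    have h2 : (Set.univ : Set (Fin n → ℕ)) = ⇑Finsupp.equivFunOnFinite '' Set.univ := by
      simp [Set.image_univ, Set.range_eq_univ.2 Finsupp.equivFunOnFinite.surjective]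
    rw [h2]
    exact h.image_of_monotone fun a b hab => hab
  have hpwo : S.IsPWO := by
    have : (Set.univ ×ˢ Set.univ : Set ((Fin n → ℕ) × (Fin n → ℕ))).IsPWO := huniv.prod huniv
    exact this.mono (by simp)
  exact hanti.finite_of_partiallyWellOrderedOn hpwo
end

section
/- Let M be a monomial A-graded ideal, let x^u be a minimal generator of M (i.e. x^u ∈ M and x^{u−e_i} ∉ M for every i with u_i > 0), and let x^v be the standard monomial of degree A u. Then u ≠ v and the pair (u,v) is primitive, i.e. the binomial x^u − x^v is a Graver binomial. -/
open MvPolynomial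

open Classical in
/-- An ideal `I ⊆ k[x_1,…,x_n]` is `A`-graded if it is generated by weighted homogeneous
elements (with respect to the weights `x_i ↦ a_i`) and for every `deg ∈ ℤ^d` the `k`-dimension
of the degree-`deg` component of `S/I` equals `1` if `deg ∈ ℕA` and `0` otherwise. -/
def IsAGraded (k : Type*) [Field k] (n d : ℕ) (a : Fin n → Fin d → ℤ)
    (I : Ideal (MvPolynomial (Fin n) k)) : Prop :=
  (∃ G : Set (MvPolynomial (Fin n) k),
      (∀ f ∈ G, ∃ m : Fin d → ℤ, IsWeightedHomogeneous a f m) ∧ I = Ideal.span G) ∧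
  ∀ deg : Fin d → ℤ,
    Module.finrank k
      ↥((Submodule.span k {f : MvPolynomial (Fin n) k |
          ∃ u : Fin n → ℕ, (∑ i, (u i : ℤ) • a i) = deg ∧ f = ∏ i, X i ^ u i}).map
        (Ideal.Quotient.mkₐ k I).toLinearMap) =
      if deg ∈ AddSubmonoid.closure (Set.range a) then 1 else 0

section Aux
variable {k : Type*} [Field k] {n d : ℕ}

lemma mono_eq_monomial (k : Type*) [Field k] (n : ℕ) (w : Fin n → ℕ) :
    (∏ i, (X i : MvPolynomial (Fin n) k) ^ w i) =
      monomial (Finsupp.equivFunOnFinite.symm w) 1 := by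
  rw [← prod_X_pow_eq_monomial]
  refine (Finset.prod_subset (Finset.subset_univ _) ?_).symm
  intro i _ hi
  have : w i = 0 := by simpa using hi
  simp [this]

lemma mono_mem_of_le {M : Ideal (MvPolynomial (Fin n) k)} {w w' : Fin n → ℕ}
    (h : w ≤ w') (hw : (∏ i, (X i : MvPolynomial (Fin n) k) ^ w i) ∈ M) :
    (∏ i, (X i : MvPolynomial (Fin n) k) ^ w' i) ∈ M := by
  have : (∏ i, (X i : MvPolynomial (Fin n) k) ^ w' i) =
      (∏ i, (X i : MvPolynomial (Fin n) k) ^ (w' i - w i)) *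
        ∏ i, (X i : MvPolynomial (Fin n) k) ^ w i := by
    rw [← Finset.prod_mul_distrib]
    refine Finset.prod_congr rfl fun i _ => ?_
    rw [← pow_add, Nat.sub_add_cancel (h i)]
  rw [this]
  exact Ideal.mul_mem_left _ _ hw

lemma monomial_mem_of_support {M : Ideal (MvPolynomial (Fin n) k)}
    (hmono : ∃ G : Set (Fin n → ℕ),
      M = Ideal.span ((fun u : Fin n → ℕ => ∏ i, (X i : MvPolynomial (Fin n) k) ^ u i) '' G))
    {f : MvPolynomial (Fin n) k} (hf : f ∈ M) {m : Fin n →₀ ℕ} (hm : m ∈ f.support) :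
    (monomial m (1 : k)) ∈ M := by
  obtain ⟨G, hG⟩ := hmono
  have himg : ((fun u : Fin n → ℕ => ∏ i, (X i : MvPolynomial (Fin n) k) ^ u i) '' G) =
      ((fun s => monomial s (1 : k)) '' (Finsupp.equivFunOnFinite.symm '' G)) := by
    rw [Set.image_image]
    exact Set.image_congr fun w _ => mono_eq_monomial k n w
  rw [hG, himg] at hf ⊢
  rw [mem_ideal_span_monomial_image] at hf
  obtain ⟨si, hsi, hle⟩ := hf m hm
  have : (monomial m (1 : k)) = (monomial (m - si) (1 : k)) * monomial si 1 := by
    rw [monomial_mul, one_mul, tsub_add_cancel_of_le hle]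
  rw [this]
  exact Ideal.mul_mem_left _ _ (Ideal.subset_span ⟨si, hsi, rfl⟩)

lemma deg_mem_closure (a : Fin n → Fin d → ℤ) (w : Fin n → ℕ) :
    (∑ i, (w i : ℤ) • a i) ∈ AddSubmonoid.closure (Set.range a) :=
by
  refine sum_mem fun i _ => ?_
  rw [natCast_zsmul]
  exact AddSubmonoid.nsmul_mem _ (AddSubmonoid.subset_closure (Set.mem_range_self i)) _

lemma standard_unique {a : Fin n → Fin d → ℤ} {M : Ideal (MvPolynomial (Fin n) k)}
    (hmono : ∃ G : Set (Fin n → ℕ),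
      M = Ideal.span ((fun u : Fin n → ℕ => ∏ i, (X i : MvPolynomial (Fin n) k) ^ u i) '' G))
    (hAgraded : IsAGraded k n d a M) {w w' : Fin n → ℕ}
    (hdeg : (∑ i, (w i : ℤ) • a i) = (∑ i, (w' i : ℤ) • a i))
    (hw : (∏ i, (X i : MvPolynomial (Fin n) k) ^ w i) ∉ M)
    (hw' : (∏ i, (X i : MvPolynomial (Fin n) k) ^ w' i) ∉ M) : w = w' := by
  by_contra hne
  have hrank := hAgraded.2 (∑ i, (w i : ℤ) • a i)
  rw [if_pos (deg_mem_closure a w)] at hrank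
  set q := (Ideal.Quotient.mkₐ k M).toLinearMap with hq
  set N := (Submodule.span k {f : MvPolynomial (Fin n) k |
      ∃ u : Fin n → ℕ, (∑ i, (u i : ℤ) • a i) = (∑ i, (w i : ℤ) • a i) ∧
        f = ∏ i, X i ^ u i}).map q with hN
  have hxN : q (∏ i, (X i : MvPolynomial (Fin n) k) ^ w i) ∈ N :=
    Submodule.mem_map_of_mem (Submodule.subset_span ⟨w, rfl, rfl⟩)
  have hyN : q (∏ i, (X i : MvPolynomial (Fin n) k) ^ w' i) ∈ N :=
    Submodule.mem_map_of_mem (Submodule.subset_span ⟨w', hdeg.symm, rfl⟩)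
  have hinj : (Finsupp.equivFunOnFinite.symm w : Fin n →₀ ℕ) ≠ Finsupp.equivFunOnFinite.symm w' :=
    fun h => hne (Finsupp.equivFunOnFinite.symm.injective h)
  have hli : LinearIndependent k ![(⟨_, hxN⟩ : ↥N), ⟨_, hyN⟩] := by
    rw [LinearIndependent.pair_iff]
    intro s t hst
    have h0 : s • (∏ i, (X i : MvPolynomial (Fin n) k) ^ w i) +
        t • (∏ i, (X i : MvPolynomial (Fin n) k) ^ w' i) ∈ M := by
      have h1 := congrArg (Subtype.val) hst
      simp only [Submodule.coe_add, SetLike.val_smul, ZeroMemClass.coe_zero] at h1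
      rw [← map_smul, ← map_smul, ← map_add] at h1
      exact (Ideal.Quotient.eq_zero_iff_mem).mp h1
    constructor
    · by_contra hs
      apply hw
      rw [mono_eq_monomial]
      refine monomial_mem_of_support hmono h0 ?_
      rw [MvPolynomial.mem_support_iff]
      rw [mono_eq_monomial, mono_eq_monomial, coeff_add, coeff_smul, coeff_smul,
        coeff_monomial, coeff_monomial]
      simp [hinj.symm, hs]
    · by_contra ht
      apply hw'
      rw [mono_eq_monomial]
      refine monomial_mem_of_support hmono h0 ?_
      rw [MvPolynomial.mem_support_iff]
      rw [mono_eq_monomial, mono_eq_monomial, coeff_add, coeff_smul, coeff_smul,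
        coeff_monomial, coeff_monomial]
      simp [hinj, ht]
  have h1 : Module.rank k ↥N = 1 := Cardinal.toNat_eq_one.mp hrank
  have h2 := hli.cardinal_lift_le_rank
  rw [h1] at h2
  simp [Cardinal.mk_fin] at h2

end Aux

/-- Let `M` be a monomial `A`-graded ideal, `x^u` a minimal generator of `M`
(i.e. `x^u ∈ M` and `x^{u−e_i} ∉ M` for every `i` with `u_i > 0`), and `x^v` the standard
monomial of degree `A u` (i.e. `A v = A u` and `x^v ∉ M`). Then `u ≠ v` and `(u,v)` is
primitive, i.e. `x^u − x^v` is a Graver binomial. -/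

theorem minimal_generator_with_standard_is_primitive (k : Type*) [Field k] (n d : ℕ)
    (a : Fin n → Fin d → ℤ) (M : Ideal (MvPolynomial (Fin n) k))
    (hmono : ∃ G : Set (Fin n → ℕ),
      M = Ideal.span ((fun u : Fin n → ℕ => ∏ i, (X i : MvPolynomial (Fin n) k) ^ u i) '' G))
    (hAgraded : IsAGraded k n d a M)
    (u v : Fin n → ℕ)
    (hu : (∏ i, (X i : MvPolynomial (Fin n) k) ^ u i) ∈ M)
    (humin : ∀ i : Fin n, 0 < u i →
      (∏ l, (X l : MvPolynomial (Fin n) k) ^ (u - Pi.single (M := fun _ : Fin n => ℕ) i 1) l) ∉ M)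
    (hdeg : (∑ i, (v i : ℤ) • a i) = (∑ i, (u i : ℤ) • a i))
    (hv : (∏ i, (X i : MvPolynomial (Fin n) k) ^ v i) ∉ M) :
    u ≠ v ∧ IsPrimitivePair n d a u v := by
  have huv : u ≠ v := fun h => hv (h ▸ hu)
  refine ⟨huv, huv, hdeg.symm, ?_⟩
  rintro ⟨u', v', hne, hu'le, hv'le, hu'v', hdeg'⟩
  have hv' : (∏ i, (X i : MvPolynomial (Fin n) k) ^ v' i) ∉ M :=
    fun h => hv (mono_mem_of_le hv'le h)
  have hu'mem : (∏ i, (X i : MvPolynomial (Fin n) k) ^ u' i) ∈ M := by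
    by_contra h
    exact hu'v' (standard_unique hmono hAgraded hdeg' h hv')
  have huu' : u' = u := by
    by_contra h
    obtain ⟨i, hi⟩ : ∃ i, u' i < u i := by
      by_contra hno
      push_neg at hno
      exact h (le_antisymm hu'le fun i => hno i)
    have hle : u' ≤ u - Pi.single (M := fun _ : Fin n => ℕ) i 1 := by
      intro l
      by_cases hl : l = i
      · subst hl
        simp only [Pi.sub_apply, Pi.single_eq_same]
        omega
      · simp only [Pi.sub_apply, Pi.single_eq_of_ne hl]
        exact le_trans (hu'le l) (by omega)
    exact humin i (by omega) (mono_mem_of_le hle hu'mem)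
  have hdv : (∑ i, (v' i : ℤ) • a i) = (∑ i, (v i : ℤ) • a i) := by
    rw [← hdeg', huu', ← hdeg]
  have hvv' : v' = v := standard_unique hmono hAgraded hdv hv' hv
  exact hne (by rw [huu', hvv'])
end

section
/- Let ι be a finite index set, u_i, v_i ∈ ℕ^n for i ∈ ι, and γ_i ∈ k^× units of k. If m, n ∈ ℕ^n satisfy x^m − x^n ∈ ⟨x^{u_i} − x^{v_i} : i ∈ ι⟩ in S, then there exists w : ι → ℤ such that x^m − (∏_{i∈ι} γ_i^{w_i})·x^n belongs to the ideal ⟨x^{u_i} − γ_i x^{v_i} : i ∈ ι⟩ of S. -/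
open MvPolynomial

section Aux

variable {k : Type*} [Field k] {n : ℕ} {ι : Type*} [Fintype ι]

noncomputable def toD (f : Fin n → ℕ) : (Fin n) →₀ ℕ := Finsupp.equivFunOnFinite.symm f

lemma prodXpow (f : Fin n → ℕ) :
    (∏ i, (X i : MvPolynomial (Fin n) k) ^ f i) = monomial (toD f) 1 := by
  rw [monomial_eq, map_one, one_mul,
    Finsupp.prod_fintype _ _ (fun i => by simp)]
  simp [toD]

/-- the basic move relation on exponent vectors -/
def MoveRel (u v : ι → Fin n → ℕ) (a b : (Fin n) →₀ ℕ) : Prop :=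
  ∃ i d, a = d + toD (u i) ∧ b = d + toD (v i)

omit [Fintype ι] in
lemma moveRel_shift {u v : ι → Fin n → ℕ} (d : (Fin n) →₀ ℕ) {a b : (Fin n) →₀ ℕ}
    (h : Relation.EqvGen (MoveRel u v) a b) :
    Relation.EqvGen (MoveRel u v) (d + a) (d + b) := by
  induction h with
  | rel a b hab =>
    obtain ⟨i, e, ha, hb⟩ := hab
    exact Relation.EqvGen.rel _ _ ⟨i, d + e, by rw [ha, add_assoc], by rw [hb, add_assoc]⟩
  | refl => exact Relation.EqvGen.refl _
  | symm _ _ _ ih => exact Relation.EqvGen.symm _ _ ih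
  | trans _ _ _ _ _ ih1 ih2 => exact Relation.EqvGen.trans _ _ _ ih1 ih2

end Aux

/-- Telescoping-sum deformation: if `x^m − x^n` lies in the pure-difference binomial ideal
`⟨x^{u_i} − x^{v_i} : i ∈ ι⟩`, then there is `w : ι → ℤ` such that
`x^m − (∏ i, γ_i^{w_i})·x^n` lies in the deformed binomial ideal
`⟨x^{u_i} − γ_i·x^{v_i} : i ∈ ι⟩`. -/
theorem telescoping_deformation (k : Type*) [Field k] (n : ℕ)
    (ι : Type*) [Fintype ι] (u v : ι → Fin n → ℕ) (γ : ι → kˣ)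
    (m m' : Fin n → ℕ)
    (h : (∏ i, (X i : MvPolynomial (Fin n) k) ^ m i) - (∏ i, X i ^ m' i) ∈
      Ideal.span {f : MvPolynomial (Fin n) k |
        ∃ i : ι, f = (∏ l, X l ^ u i l) - ∏ l, X l ^ v i l}) :
    ∃ w : ι → ℤ,
      (∏ i, (X i : MvPolynomial (Fin n) k) ^ m i) -
          C ((∏ i, γ i ^ w i : kˣ) : k) * (∏ i, X i ^ m' i) ∈
        Ideal.span {f : MvPolynomial (Fin n) k |
          ∃ i : ι, f = (∏ l, X l ^ u i l) - C ((γ i : k)) * ∏ l, X l ^ v i l} := by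
  classical
  -- Step 0: notation
  set S := MvPolynomial (Fin n) k
  set R := MoveRel u v (n := n) (ι := ι)
  -- The k-submodule spanned by differences of equivalent monomials
  set J' : Submodule k S := Submodule.span k
    {p : S | ∃ a b, Relation.EqvGen R a b ∧ p = monomial a 1 - monomial b 1} with hJ'
  have hgen : ∀ a b : (Fin n) →₀ ℕ, Relation.EqvGen R a b →
      (monomial a 1 - monomial b 1 : S) ∈ J' := fun a b hab =>
    Submodule.subset_span ⟨a, b, hab, rfl⟩
  -- J' is closed under multiplication by arbitrary polynomials
  have hmul : ∀ (r : S), ∀ p ∈ J', r * p ∈ J' := by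
    intro r p hp
    refine Submodule.span_induction (p := fun p _ => r * p ∈ J') ?_ (by simp) ?_ ?_ hp
    · rintro q ⟨a, b, hab, rfl⟩
      rw [r.as_sum, Finset.sum_mul]
      refine Submodule.sum_mem _ fun d _ => ?_
      have : (monomial d (coeff d r) : S) * (monomial a 1 - monomial b 1)
          = coeff d r • (monomial (d + a) 1 - monomial (d + b) 1) := by
        rw [mul_sub, monomial_mul, monomial_mul, smul_sub]
        simp [smul_monomial]
      rw [this]
      exact Submodule.smul_mem _ _ (hgen _ _ (moveRel_shift d hab))
    · intro x y _ _ hx hy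
      rw [mul_add]; exact add_mem hx hy
    · intro a x _ hx
      rw [Algebra.mul_smul_comm]
      exact Submodule.smul_mem _ _ hx
  -- The pure-difference ideal is contained in J'
  have hsub : ∀ p ∈ Ideal.span {f : S |
      ∃ i : ι, f = (∏ l, X l ^ u i l) - ∏ l, X l ^ v i l}, p ∈ J' := by
    intro p hp
    refine Submodule.span_induction (p := fun p _ => p ∈ J') ?_ (by simp) ?_ ?_ hp
    · rintro q ⟨i, rfl⟩
      rw [prodXpow, prodXpow]
      refine hgen _ _ (Relation.EqvGen.rel _ _ ⟨i, 0, by simp, by simp⟩)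
    · intro x y _ _ hx hy; exact add_mem hx hy
    · intro r x _ hx; exact hmul r x hx
  -- Step 2: membership in J' of a monomial difference forces equivalence
  have key : Relation.EqvGen R (toD m) (toD m') := by
    set st := Relation.EqvGen.setoid R
    set T : S →ₗ[k] (Quotient st →₀ k) :=
      Finsupp.lmapDomain k k (Quotient.mk st) ∘ₗ (AddMonoidAlgebra.coeffLinearEquiv k).toLinearMap with hT
    have hTmono : ∀ (a : (Fin n) →₀ ℕ) (c : k),
        T (monomial a c) = Finsupp.single (Quotient.mk st a) c := by
      intro a c
      rw [← single_eq_monomial]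
      exact Finsupp.mapDomain_single
    have hker : J' ≤ LinearMap.ker T := by
      rw [hJ', Submodule.span_le]
      rintro q ⟨a, b, hab, rfl⟩
      simp only [SetLike.mem_coe, LinearMap.mem_ker, map_sub, hTmono]
      rw [Quotient.sound (s := st) hab, sub_self]
    have hm := hsub _ h
    rw [prodXpow, prodXpow] at hm
    have := hker hm
    rw [LinearMap.mem_ker, map_sub, hTmono, hTmono, sub_eq_zero] at this
    exact Quotient.exact ((Finsupp.single_left_inj one_ne_zero).mp this)
  -- Step 3: telescoping along the equivalence, with units
  set Jd : Ideal S := Ideal.span {f : S |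
    ∃ i : ι, f = (∏ l, X l ^ u i l) - C ((γ i : k)) * ∏ l, X l ^ v i l} with hJd
  have main : ∀ a b : (Fin n) →₀ ℕ, Relation.EqvGen R a b →
      ∃ w : ι → ℤ, (monomial a 1 : S) -
        C ((∏ i, γ i ^ w i : kˣ) : k) * monomial b 1 ∈ Jd := by
    intro a b hab
    induction hab with
    | rel a b hab =>
      obtain ⟨i, d, rfl, rfl⟩ := hab
      refine ⟨Pi.single i 1, ?_⟩
      have hprod : (∏ j, γ j ^ (Pi.single i 1 : ι → ℤ) j) = γ i := by
        rw [Finset.prod_eq_single i (fun j _ hj => by simp [Pi.single_eq_of_ne hj])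
          (by simp)]
        simp
      rw [hprod]
      have : (monomial (d + toD (u i)) 1 : S) - C ((γ i : k) ^ (1:ℤ) : k) * monomial (d + toD (v i)) 1
          = monomial d 1 * ((∏ l, X l ^ u i l) - C ((γ i : k)) * ∏ l, X l ^ v i l) := by
        rw [prodXpow, prodXpow, mul_sub, monomial_mul, mul_left_comm, monomial_mul]
        simp
      simp only [zpow_one] at this ⊢
      rw [this]
      exact Ideal.mul_mem_left _ _ (Ideal.subset_span ⟨i, rfl⟩)
    | refl a => exact ⟨0, by simp⟩
    | symm a b _ ih =>
      obtain ⟨w, hw⟩ := ih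
      refine ⟨-w, ?_⟩
      have hc : ((∏ i, γ i ^ (-w) i : kˣ) : k) = ((∏ i, γ i ^ w i : kˣ) : k)⁻¹ := by
        rw [← Units.val_inv_eq_inv_val]
        congr 1
        rw [← Finset.prod_inv_distrib]
        exact Finset.prod_congr rfl fun i _ => by simp [zpow_neg]
      have : (monomial b 1 : S) - C ((∏ i, γ i ^ (-w) i : kˣ) : k) * monomial a 1
          = (- C ((∏ i, γ i ^ (-w) i : kˣ) : k)) *
            ((monomial a 1 : S) - C ((∏ i, γ i ^ w i : kˣ) : k) * monomial b 1) := by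
        have hne : ((∏ i, γ i ^ w i : kˣ) : k) ≠ 0 := Units.ne_zero _
        have h1 : C (((∏ i, γ i ^ w i : kˣ) : k))⁻¹ * C (((∏ i, γ i ^ w i : kˣ) : k)) = (1:S) := by
          rw [← map_mul, inv_mul_cancel₀ hne, map_one]
        rw [hc]
        linear_combination (-(monomial b 1 : S)) * h1
      rw [this]
      exact Ideal.mul_mem_left _ _ hw
    | trans a b c _ _ ih1 ih2 =>
      obtain ⟨w1, hw1⟩ := ih1
      obtain ⟨w2, hw2⟩ := ih2
      refine ⟨w1 + w2, ?_⟩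
      have hc : ((∏ i, γ i ^ (w1 + w2) i : kˣ) : k)
          = ((∏ i, γ i ^ w1 i : kˣ) : k) * ((∏ i, γ i ^ w2 i : kˣ) : k) := by
        rw [← Units.val_mul]
        congr 1
        rw [← Finset.prod_mul_distrib]
        exact Finset.prod_congr rfl fun i _ => by simp [zpow_add]
      have : (monomial a 1 : S) - C ((∏ i, γ i ^ (w1 + w2) i : kˣ) : k) * monomial c 1
          = ((monomial a 1 : S) - C ((∏ i, γ i ^ w1 i : kˣ) : k) * monomial b 1)
            + C ((∏ i, γ i ^ w1 i : kˣ) : k) *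
              ((monomial b 1 : S) - C ((∏ i, γ i ^ w2 i : kˣ) : k) * monomial c 1) := by
        rw [hc, map_mul]; ring
      rw [this]
      exact add_mem hw1 (Ideal.mul_mem_left _ _ hw2)
  obtain ⟨w, hw⟩ := main _ _ key
  exact ⟨w, by rwa [prodXpow, prodXpow]⟩
end

section
/- Let J = J₀ ⊔ J₁ be a finite index set, with m_j, n_j ∈ ℕ^n for j ∈ J₁ and m_j ∈ ℕ^n for j ∈ J₀, and let b, b' : J₁ → ℤ^r. Suppose there exists an invertible integer matrix Φ ∈ GL(r,ℤ) with Φ·b_j = b'_j for all j ∈ J₁. For λ ∈ (k^×)^r set I(λ) := ⟨x^{m_j} − λ^{b_j}·x^{n_j} : j ∈ J₁⟩ + ⟨x^{m_j} : j ∈ J₀⟩ and I'(λ) defined the same way with b' in place of b. Then the two families of ideals coincide: {I(λ) : λ ∈ (k^×)^r} = {I'(μ) : μ ∈ (k^×)^r}. -/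
open MvPolynomial

/-- The ideal `I(λ) = ⟨x^{m_j} − λ^{b_j}·x^{n_j} : j ∈ J₁⟩ + ⟨x^{m_j} : j ∈ J₀⟩` of a
universal family, evaluated at a point `λ` of the torus `(kˣ)^r`. -/
noncomputable def famIdeal (k : Type*) [Field k] (n r : ℕ) {J₀ J₁ : Type*}
    (m₁ nn : J₁ → Fin n → ℕ) (m₀ : J₀ → Fin n → ℕ) (b : J₁ → Fin r → ℤ)
    (lam : Fin r → kˣ) : Ideal (MvPolynomial (Fin n) k) :=
  Ideal.span
    ({f : MvPolynomial (Fin n) k | ∃ j : J₁,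
        f = (∏ i, X i ^ m₁ j i) - C ((∏ l, lam l ^ b j l : kˣ) : k) * ∏ i, X i ^ nn j i} ∪
     {f : MvPolynomial (Fin n) k | ∃ j : J₀, f = ∏ i, X i ^ m₀ j i})

lemma zpow_finset_sum {G : Type*} [CommGroup G] {ι : Type*} (a : G) (s : Finset ι)
    (f : ι → ℤ) : a ^ (∑ i ∈ s, f i) = ∏ i ∈ s, a ^ f i := by
  induction s using Finset.cons_induction with
  | empty => simp
  | cons i s hi ih => rw [Finset.sum_cons, Finset.prod_cons, zpow_add, ih]

lemma pairing_mulVec {k : Type*} [Field k] {r : ℕ} (A : Matrix (Fin r) (Fin r) ℤ)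
    (lam : Fin r → kˣ) (v : Fin r → ℤ) :
    (∏ l, (∏ m, lam m ^ A m l) ^ v l) = ∏ m, lam m ^ A.mulVec v m := by
  have : (∏ l, (∏ m, lam m ^ A m l) ^ v l) = ∏ l, ∏ m, lam m ^ (A m l * v l) := by
    refine Finset.prod_congr rfl fun l _ => ?_
    rw [← Finset.prod_zpow]
    exact Finset.prod_congr rfl fun m _ => (zpow_mul _ _ _).symm
  rw [this, Finset.prod_comm]
  refine Finset.prod_congr rfl fun m _ => ?_
  rw [Matrix.mulVec, dotProduct, zpow_finset_sum]

lemma famIdeal_congr {k : Type*} [Field k] {n r : ℕ} {J₀ J₁ : Type*}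
    (m₁ nn : J₁ → Fin n → ℕ) (m₀ : J₀ → Fin n → ℕ) (b b' : J₁ → Fin r → ℤ)
    (lam mu : Fin r → kˣ)
    (h : ∀ j : J₁, (∏ l, lam l ^ b j l) = ∏ l, mu l ^ b' j l) :
    famIdeal k n r m₁ nn m₀ b lam = famIdeal k n r m₁ nn m₀ b' mu := by
  unfold famIdeal
  congr 1
  congr 1
  ext f
  simp only [Set.mem_setOf_eq]
  constructor <;> rintro ⟨j, rfl⟩ <;> exact ⟨j, by rw [h j]⟩

/-- If `Φ ∈ GL(r,ℤ)` satisfies `Φ·b_j = b'_j` for all `j ∈ J₁`, then the family of ideals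
`I(λ)` built from the exponents `b` coincides with the family `I'(μ)` built from `b'`. -/
theorem families_eq_of_glZ (k : Type*) [Field k] (n r : ℕ)
    (J₀ J₁ : Type*) [Fintype J₀] [Fintype J₁]
    (m₁ nn : J₁ → Fin n → ℕ) (m₀ : J₀ → Fin n → ℕ) (b b' : J₁ → Fin r → ℤ)
    (Φ : Matrix (Fin r) (Fin r) ℤ) (hΦ : IsUnit Φ.det)
    (hb : ∀ j : J₁, Φ.mulVec (b j) = b' j) :
    (Set.range fun lam : Fin r → kˣ => famIdeal k n r m₁ nn m₀ b lam) =
      (Set.range fun lam : Fin r → kˣ => famIdeal k n r m₁ nn m₀ b' lam) := by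
  have hinv : Φ⁻¹ * Φ = 1 := Matrix.nonsing_inv_mul Φ hΦ
  ext I
  simp only [Set.mem_range]
  constructor
  · rintro ⟨lam, rfl⟩
    refine ⟨fun l => ∏ m, lam m ^ (Φ⁻¹ m l), (famIdeal_congr _ _ _ _ _ _ _ fun j => ?_).symm⟩
    rw [pairing_mulVec, ← hb j, Matrix.mulVec_mulVec, hinv, Matrix.one_mulVec]
  · rintro ⟨mu, rfl⟩
    refine ⟨fun l => ∏ m, mu m ^ (Φ m l), famIdeal_congr _ _ _ _ _ _ _ fun j => ?_⟩
    rw [pairing_mulVec, hb j]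
end

section
/- Assume ker A ∩ ℕ^n = {0}. Let J₁ and J₀ be finite index sets, with m_j, n_j ∈ ℕ^n satisfying A m_j = A n_j and b_j ∈ ℤ^r for j ∈ J₁, and m_j ∈ ℕ^n for j ∈ J₀. Then there exists w ∈ ℤ^n with w_i > 0 for all i, lying in the row span of A (w = Aᵀv for some v ∈ ℤ^d), such that with respect to the grading on k[x_1,…,x_n,y_1,…,y_r,z_1,…,z_r] assigning x_i weight w_i and every y_l and z_l weight 1, each binomial z^{b_j^+}·y^{b_j^−}·x^{m_j} − z^{b_j^−}·y^{b_j^+}·x^{n_j} (j ∈ J₁) and each monomial x^{m_j} (j ∈ J₀) is homogeneous. In particular the generalised universal family is homogeneous with respect to a strictly positive grading. -/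
open MvPolynomial

open Finset in

/-- Gordan's theorem over a linearly ordered field, by Fourier–Motzkin elimination
(induction on the dimension `d`). -/
private theorem gordan_alt {F : Type*} [Field F] [LinearOrder F] [IsStrictOrderedRing F] :
    ∀ (d : ℕ) (ι : Type) [Fintype ι] (a : ι → Fin d → F),
      (∃ v : Fin d → F, ∀ i, 0 < ∑ j, v j * a i j) ∨
      (∃ lam : ι → F, (∀ i, 0 ≤ lam i) ∧ lam ≠ 0 ∧ ∀ j, ∑ i, lam i * a i j = 0) := by
  classical
  intro d
  induction d with
  | zero =>
    intro ι _ a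
    by_cases h : Nonempty ι
    · right
      refine ⟨fun _ => 1, fun _ => zero_le_one, ?_, fun j => j.elim0⟩
      intro h0
      obtain ⟨i⟩ := h
      simpa using congrFun h0 i
    · left
      exact ⟨fun j => j.elim0, fun i => absurd ⟨i⟩ h⟩
  | succ d ih =>
    intro ι _ a
    set α : ι → F := fun i => a i (Fin.last d) with hα
    set Z := {i : ι // α i = 0} with hZ
    set P := {i : ι // 0 < α i} with hP
    set N := {i : ι // α i < 0} with hN
    set a' : Z ⊕ P × N → Fin d → F :=
      fun x => Sum.elim (fun z j => a z.1 j.castSucc)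
        (fun pq j => α pq.1.1 * a pq.2.1 j.castSucc - α pq.2.1 * a pq.1.1 j.castSucc) x
      with ha'
    rcases ih (Z ⊕ P × N) a' with ⟨u, hu⟩ | ⟨lam, hlam0, hlamne, hlameq⟩
    · -- feasible case: extend u by a suitable last coordinate t
      left
      set S : ι → F := fun i => ∑ j, u j * a i j.castSucc with hSdef
      set c : ι → F := fun i => -S i / α i with hc
      have hZpos : ∀ i (h : α i = 0), 0 < S i := by
        intro i h
        simpa [ha', hSdef] using hu (Sum.inl (⟨i, h⟩ : Z))
      have key : ∀ (p : P) (q : N), c p.1 < c q.1 := by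
        intro p q
        have h1 := hu (Sum.inr (p, q))
        have hd : 0 < α p.1 * S q.1 - α q.1 * S p.1 := by
          have heq : ∑ j, u j * a' (Sum.inr (p, q)) j
              = α p.1 * S q.1 - α q.1 * S p.1 := by
            simp only [ha', hSdef, Sum.elim_inr]
            rw [Finset.mul_sum, Finset.mul_sum, ← Finset.sum_sub_distrib]
            apply Finset.sum_congr rfl
            intro j _; ring
          rw [heq] at h1; exact h1
        have hp := p.2
        have hq := q.2
        simp only [hc]
        rw [lt_div_iff_of_neg hq, div_mul_eq_mul_div, lt_div_iff₀ hp]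
        nlinarith
      -- choose t strictly between all c p (p ∈ P) and all c q (q ∈ N)
      have ht : ∃ t : F, (∀ i (h : 0 < α i), c i < t) ∧ (∀ i (h : α i < 0), t < c i) := by
        by_cases hPn : Nonempty P
        · obtain ⟨p0, -, hp0⟩ := Finset.exists_max_image (Finset.univ : Finset P)
            (fun p => c p.1) ⟨hPn.some, Finset.mem_univ _⟩
          by_cases hNn : Nonempty N
          · obtain ⟨q0, -, hq0⟩ := Finset.exists_min_image (Finset.univ : Finset N)
              (fun q => c q.1) ⟨hNn.some, Finset.mem_univ _⟩
            refine ⟨(c p0.1 + c q0.1) / 2, ?_, ?_⟩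
            · intro i h
              have := hp0 ⟨i, h⟩ (Finset.mem_univ _)
              have := key p0 q0
              linarith
            · intro i h
              have := hq0 ⟨i, h⟩ (Finset.mem_univ _)
              have := key p0 q0
              linarith
          · refine ⟨c p0.1 + 1, ?_, ?_⟩
            · intro i h
              have := hp0 ⟨i, h⟩ (Finset.mem_univ _)
              simp only at this ⊢
              linarith
            · intro i h; exact absurd ⟨⟨i, h⟩⟩ hNn
        · by_cases hNn : Nonempty N
          · obtain ⟨q0, -, hq0⟩ := Finset.exists_min_image (Finset.univ : Finset N)
              (fun q => c q.1) ⟨hNn.some, Finset.mem_univ _⟩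
            refine ⟨c q0.1 - 1, ?_, ?_⟩
            · intro i h; exact absurd ⟨⟨i, h⟩⟩ hPn
            · intro i h
              have := hq0 ⟨i, h⟩ (Finset.mem_univ _)
              simp only at this ⊢
              linarith
          · exact ⟨0, fun i h => absurd ⟨⟨i, h⟩⟩ hPn, fun i h => absurd ⟨⟨i, h⟩⟩ hNn⟩
      obtain ⟨t, htP, htN⟩ := ht
      refine ⟨Fin.snoc u t, ?_⟩
      intro i
      have hsum : ∑ j : Fin (d + 1), (Fin.snoc u t : Fin (d+1) → F) j * a i j
          = S i + t * α i := by
        rw [Fin.sum_univ_castSucc]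
        simp [hSdef, hα]
      rw [hsum]
      rcases lt_trichotomy (α i) 0 with hneg | hzero | hpos
      · have h1 := htN i hneg
        rw [hc] at h1
        have := (lt_div_iff_of_neg hneg).mp h1
        linarith
      · have := hZpos i hzero
        rw [hzero]; linarith
      · have h1 := htP i hpos
        rw [hc] at h1
        have := (div_lt_iff₀ hpos).mp h1
        linarith
    · -- infeasible case: lift the certificate
      right
      set mu : ι → F := fun i =>
        (∑ z : Z, if z.1 = i then lam (Sum.inl z) else 0)
          + ∑ p : P, ∑ q : N, lam (Sum.inr (p, q)) *
              ((if p.1 = i then -(α q.1) else 0) + (if q.1 = i then α p.1 else 0)) with hmu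
      have hA : ∀ (p : P) (q : N) (i : ι),
          (0:F) ≤ (if p.1 = i then -(α q.1) else 0) + (if q.1 = i then α p.1 else 0) := by
        intro p q i
        have h1 := p.2
        have h2 := q.2
        split_ifs <;> linarith
      have hB : ∀ (z : Z) (i : ι), (0:F) ≤ if z.1 = i then lam (Sum.inl z) else 0 := by
        intro z i
        split_ifs
        · exact hlam0 _
        · exact le_rfl
      have hmu0 : ∀ i, 0 ≤ mu i := by
        intro i
        exact add_nonneg (Finset.sum_nonneg fun z _ => hB z i)
          (Finset.sum_nonneg fun p _ => Finset.sum_nonneg fun q _ =>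
            mul_nonneg (hlam0 _) (hA p q i))
      have hmupos : ∃ i, 0 < mu i := by
        have : ∃ x, lam x ≠ 0 := by
          by_contra hcon
          push_neg at hcon
          exact hlamne (funext hcon)
        obtain ⟨x, hx⟩ := this
        have hxpos : 0 < lam x := lt_of_le_of_ne (hlam0 x) (Ne.symm hx)
        rcases x with z | ⟨p, q⟩
        · refine ⟨z.1, ?_⟩
          rw [hmu]
          refine add_pos_of_pos_of_nonneg ?_
            (Finset.sum_nonneg fun p _ => Finset.sum_nonneg fun q _ =>
              mul_nonneg (hlam0 _) (hA p q z.1))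
          refine Finset.sum_pos' (fun z' _ => hB z' z.1) ⟨z, Finset.mem_univ _, ?_⟩
          simp [hxpos]
        · refine ⟨p.1, ?_⟩
          rw [hmu]
          refine add_pos_of_nonneg_of_pos
            (Finset.sum_nonneg fun z _ => hB z p.1) ?_
          refine Finset.sum_pos'
            (fun p' _ => Finset.sum_nonneg fun q' _ =>
              mul_nonneg (hlam0 _) (hA p' q' p.1))
            ⟨p, Finset.mem_univ _, ?_⟩
          refine Finset.sum_pos'
            (fun q' _ => mul_nonneg (hlam0 _) (hA p q' p.1))
            ⟨q, Finset.mem_univ _, ?_⟩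
          have h1 : 0 < -(α q.1) := by have := q.2; linarith
          have h2 : (0:F) ≤ if q.1 = p.1 then α p.1 else 0 := by
            split_ifs
            · have := p.2; linarith
            · exact le_rfl
          have h3 : (if p.1 = p.1 then -(α q.1) else 0) = -(α q.1) := by simp
          rw [h3]
          nlinarith
      -- the general reindexing identity
      have hkey : ∀ j : Fin (d + 1), ∑ i, mu i * a i j
          = (∑ z : Z, lam (Sum.inl z) * a z.1 j)
            + ∑ p : P, ∑ q : N, lam (Sum.inr (p, q)) *
                (α p.1 * a q.1 j - α q.1 * a p.1 j) := by
        intro j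
        rw [hmu]
        simp only [add_mul]
        rw [Finset.sum_add_distrib]
        congr 1
        · have h1 : ∀ x : ι, (∑ z : Z, if z.1 = x then lam (Sum.inl z) else 0) * a x j
              = ∑ z : Z, (if z.1 = x then lam (Sum.inl z) * a x j else 0) := by
            intro x
            rw [Finset.sum_mul]
            refine Finset.sum_congr rfl fun z _ => ?_
            split_ifs <;> simp
          rw [Finset.sum_congr rfl fun x _ => h1 x, Finset.sum_comm]
          refine Finset.sum_congr rfl fun z _ => ?_
          simp [Finset.sum_ite_eq]
        · have h2 : ∀ x : ι, (∑ p : P, ∑ q : N, lam (Sum.inr (p, q)) *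
              ((if p.1 = x then -(α q.1) else 0) + (if q.1 = x then α p.1 else 0))) * a x j
              = ∑ p : P, ∑ q : N,
                  ((if p.1 = x then lam (Sum.inr (p, q)) * (-(α q.1)) * a x j else 0)
                    + (if q.1 = x then lam (Sum.inr (p, q)) * (α p.1) * a x j else 0)) := by
            intro x
            rw [Finset.sum_mul]
            refine Finset.sum_congr rfl fun p _ => ?_
            rw [Finset.sum_mul]
            refine Finset.sum_congr rfl fun q _ => ?_
            split_ifs <;> ring
          rw [Finset.sum_congr rfl fun x _ => h2 x, Finset.sum_comm]
          refine Finset.sum_congr rfl fun p _ => ?_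
          rw [Finset.sum_comm]
          refine Finset.sum_congr rfl fun q _ => ?_
          rw [Finset.sum_add_distrib, Finset.sum_ite_eq, Finset.sum_ite_eq]
          simp only [Finset.mem_univ, if_true]
          ring
      refine ⟨mu, hmu0, ?_, ?_⟩
      · obtain ⟨i, hi⟩ := hmupos
        intro hcon
        rw [hcon] at hi
        simp at hi
      · intro j
        rw [hkey j]
        refine Fin.lastCases ?_ ?_ j
        · have h1 : ∀ z : Z, lam (Sum.inl z) * a z.1 (Fin.last d) = 0 := by
            intro z
            have := z.2
            simp only [hα] at this
            rw [this, mul_zero]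
          have h2 : ∀ (p : P) (q : N), lam (Sum.inr (p, q)) *
              (α p.1 * a q.1 (Fin.last d) - α q.1 * a p.1 (Fin.last d)) = 0 := by
            intro p q
            have : α p.1 * a q.1 (Fin.last d) - α q.1 * a p.1 (Fin.last d) = 0 := by
              simp only [hα]; ring
            rw [this, mul_zero]
          rw [Finset.sum_congr rfl (fun z _ => h1 z)]
          rw [Finset.sum_congr rfl (fun p _ => Finset.sum_congr rfl (fun q _ => h2 p q))]
          simp
        · intro j'
          have := hlameq j'
          rw [Fintype.sum_sum_type] at this
          rw [Fintype.sum_prod_type] at this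
          simpa [ha'] using this


/-- Clear denominators of a finite family of rationals. -/
private theorem exists_int_scaling {ι : Type*} [Fintype ι] (v : ι → ℚ) :
    ∃ (V : ι → ℤ) (Nd : ℕ), 0 < Nd ∧ ∀ i, (V i : ℚ) = (Nd : ℚ) * v i := by
  classical
  refine ⟨fun i => (v i).num * (((∏ t, (v t).den) / (v i).den : ℕ) : ℤ), ∏ t, (v t).den,
    Finset.prod_pos fun t _ => (v t).pos, ?_⟩
  intro i
  dsimp only
  obtain ⟨kk, hkk⟩ := Finset.dvd_prod_of_mem (fun t => (v t).den) (Finset.mem_univ i)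
  rw [hkk, Nat.mul_div_cancel_left kk (v i).pos]
  have hden : ((v i).den : ℚ) ≠ 0 := by exact_mod_cast (v i).pos.ne'
  push_cast
  have h : v i * ((v i).den : ℚ) = ((v i).num : ℚ) := by
    rw [eq_comm, ← div_eq_iff hden, Rat.num_div_den]
  rw [← h]
  ring




/-- Assume `ker A ∩ ℕ^n = {0}`. Then there is a strictly positive integer vector `w` in the
row span of `A` such that, with respect to the grading on `k[x, y, z]` assigning `x_i` the
weight `w_i` and every `y_l` and `z_l` the weight `1`, each binomial
`z^{b_j^+}·y^{b_j^−}·x^{m_j} − z^{b_j^−}·y^{b_j^+}·x^{n_j}` (`j ∈ J₁`, where `A m_j = A n_j`)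
and each monomial `x^{m_j}` (`j ∈ J₀`) is homogeneous. In particular the generalised
universal family is homogeneous with respect to a strictly positive grading.

The variables of `k[x, y, z]` are indexed by `Fin n ⊕ (Fin r ⊕ Fin r)`, where `Sum.inl i`
is `x_i`, `Sum.inr (Sum.inl l)` is `y_l`, and `Sum.inr (Sum.inr l)` is `z_l`; for `b ∈ ℤ^r`
the componentwise nonnegative parts are `b^+ = l ↦ (b l).toNat` and
`b^− = l ↦ (−(b l)).toNat`. -/
theorem generalised_universal_family_homogeneous (k : Type*) [Field k] (n d r : ℕ)
    (a : Fin n → Fin d → ℤ)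
    (hker : ∀ u : Fin n → ℤ, (∀ i, 0 ≤ u i) → (∑ i, u i • a i) = 0 → u = 0)
    (J₀ J₁ : Type*) [Fintype J₀] [Fintype J₁]
    (m₁ nn : J₁ → Fin n → ℕ) (m₀ : J₀ → Fin n → ℕ) (b : J₁ → Fin r → ℤ)
    (hdeg : ∀ j : J₁, (∑ i, (m₁ j i : ℤ) • a i) = ∑ i, (nn j i : ℤ) • a i) :
    ∃ w : Fin n → ℤ,
      (∀ i, 0 < w i) ∧
      (∃ v : Fin d → ℤ, ∀ i, w i = ∑ jj, v jj * a i jj) ∧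
      (∀ j : J₁, ∃ deg : ℤ,
        IsWeightedHomogeneous (Sum.elim w fun _ : Fin r ⊕ Fin r => (1 : ℤ))
          ((∏ l, X (Sum.inr (Sum.inr l)) ^ (b j l).toNat) *
              (∏ l, X (Sum.inr (Sum.inl l)) ^ (-(b j l)).toNat) *
              (∏ i, (X (Sum.inl i) : MvPolynomial (Fin n ⊕ (Fin r ⊕ Fin r)) k) ^ m₁ j i) -
            (∏ l, X (Sum.inr (Sum.inr l)) ^ (-(b j l)).toNat) *
              (∏ l, X (Sum.inr (Sum.inl l)) ^ (b j l).toNat) *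
              (∏ i, (X (Sum.inl i) : MvPolynomial (Fin n ⊕ (Fin r ⊕ Fin r)) k) ^ nn j i))
          deg) ∧
      (∀ j : J₀, ∃ deg : ℤ,
        IsWeightedHomogeneous (Sum.elim w fun _ : Fin r ⊕ Fin r => (1 : ℤ))
          (∏ i, (X (Sum.inl i) : MvPolynomial (Fin n ⊕ (Fin r ⊕ Fin r)) k) ^ m₀ j i)
          deg) := by
  classical
  -- Step 1: an integer vector `V` with `∀ i, 0 < ∑ j, V j * a i j`
  obtain ⟨V, hV⟩ : ∃ V : Fin d → ℤ, ∀ i, 0 < ∑ j, V j * a i j := by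
    rcases gordan_alt d (Fin n) (fun i j => (a i j : ℚ)) with ⟨v, hv⟩ |
      ⟨lam, hlam0, hlamne, hlameq⟩
    · obtain ⟨V, Nd, hNd, hVeq⟩ := exists_int_scaling v
      refine ⟨V, fun i => ?_⟩
      have h2 : (0:ℚ) < (Nd:ℚ) * ∑ j, v j * (a i j : ℚ) :=
        mul_pos (by exact_mod_cast hNd) (hv i)
      have h3 : ((∑ j, V j * a i j : ℤ) : ℚ) = (Nd:ℚ) * ∑ j, v j * (a i j : ℚ) := by
        push_cast
        rw [Finset.mul_sum]
        exact Finset.sum_congr rfl fun j _ => by rw [hVeq j]; ring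
      exact_mod_cast h3 ▸ h2
    · exfalso
      obtain ⟨L, Nd, hNd, hLeq⟩ := exists_int_scaling lam
      have hNdQ : ((Nd:ℚ)) ≠ 0 := by exact_mod_cast hNd.ne'
      have hL0 : ∀ i, 0 ≤ L i := by
        intro i
        have : (0:ℚ) ≤ (L i : ℚ) := by
          rw [hLeq i]
          exact mul_nonneg (by positivity) (hlam0 i)
        exact_mod_cast this
      have hLsum : (∑ i, L i • a i) = 0 := by
        funext j
        have hq : ((∑ i, L i * a i j : ℤ) : ℚ) = 0 := by
          push_cast
          have : ∀ i : Fin n, (L i : ℚ) * (a i j : ℚ) = (Nd:ℚ) * (lam i * (a i j : ℚ)) := by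
            intro i; rw [hLeq i]; ring
          rw [Finset.sum_congr rfl fun i _ => this i, ← Finset.mul_sum, hlameq j, mul_zero]
        have hz : (∑ i, L i * a i j : ℤ) = 0 := by exact_mod_cast hq
        simpa [Finset.sum_apply, smul_eq_mul] using hz
      have hL := hker L hL0 hLsum
      obtain ⟨i, hi⟩ : ∃ i, lam i ≠ 0 := by
        by_contra hc; push_neg at hc; exact hlamne (funext hc)
      have : (L i : ℚ) ≠ 0 := by rw [hLeq i]; exact mul_ne_zero hNdQ hi
      rw [hL] at this
      simp at this
  set w : Fin n → ℤ := fun i => ∑ jj, V jj * a i jj with hwdef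
  set W : (Fin n ⊕ (Fin r ⊕ Fin r)) → ℤ := Sum.elim w fun _ => (1:ℤ) with hWdef
  have hpow : ∀ (s : Fin n ⊕ (Fin r ⊕ Fin r)) (e : ℕ),
      IsWeightedHomogeneous W ((X s : MvPolynomial (Fin n ⊕ (Fin r ⊕ Fin r)) k) ^ e)
        ((e : ℤ) * W s) := by
    intro s e
    induction e with
    | zero => simpa using isWeightedHomogeneous_one (R := k) W
    | succ e ihe =>
      have := ihe.mul (isWeightedHomogeneous_X (R := k) W s)
      rw [← pow_succ] at this
      convert this using 1
      push_cast; ring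
  have hprodx : ∀ (e : Fin n → ℕ),
      IsWeightedHomogeneous W (∏ i, (X (Sum.inl i) : MvPolynomial (Fin n ⊕ (Fin r ⊕ Fin r)) k) ^ e i)
        (∑ i, (e i : ℤ) * w i) :=
    fun e => IsWeightedHomogeneous.prod Finset.univ _ _ (fun i _ => hpow (Sum.inl i) (e i))
  have hprody : ∀ (e : Fin r → ℕ),
      IsWeightedHomogeneous W
        (∏ l, (X (Sum.inr (Sum.inl l)) : MvPolynomial (Fin n ⊕ (Fin r ⊕ Fin r)) k) ^ e l)
        (∑ l, (e l : ℤ)) := by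
    intro e
    have := IsWeightedHomogeneous.prod Finset.univ
      (fun l => (X (Sum.inr (Sum.inl l)) : MvPolynomial (Fin n ⊕ (Fin r ⊕ Fin r)) k) ^ e l)
      (fun l => (e l : ℤ) * 1) (fun l _ => hpow (Sum.inr (Sum.inl l)) (e l))
    simpa using this
  have hprodz : ∀ (e : Fin r → ℕ),
      IsWeightedHomogeneous W
        (∏ l, (X (Sum.inr (Sum.inr l)) : MvPolynomial (Fin n ⊕ (Fin r ⊕ Fin r)) k) ^ e l)
        (∑ l, (e l : ℤ)) := by
    intro e
    have := IsWeightedHomogeneous.prod Finset.univ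
      (fun l => (X (Sum.inr (Sum.inr l)) : MvPolynomial (Fin n ⊕ (Fin r ⊕ Fin r)) k) ^ e l)
      (fun l => (e l : ℤ) * 1) (fun l _ => hpow (Sum.inr (Sum.inr l)) (e l))
    simpa using this
  have swap : ∀ (c : Fin n → ℤ),
      ∑ i, c i * w i = ∑ jj, V jj * ∑ i, c i * a i jj := by
    intro c
    simp only [hwdef, Finset.mul_sum]
    rw [Finset.sum_comm]
    exact Finset.sum_congr rfl fun jj _ => Finset.sum_congr rfl fun i _ => by ring
  refine ⟨w, fun i => hV i, ⟨V, fun i => rfl⟩, ?_, ?_⟩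
  · intro j
    have hco : ∀ jj, ∑ i, (m₁ j i : ℤ) * a i jj = ∑ i, (nn j i : ℤ) * a i jj := by
      intro jj
      have := congrFun (hdeg j) jj
      simpa [Finset.sum_apply, smul_eq_mul] using this
    have key : ∑ i, (m₁ j i : ℤ) * w i = ∑ i, (nn j i : ℤ) * w i := by
      rw [swap, swap]
      exact Finset.sum_congr rfl fun jj _ => by rw [hco jj]
    set Dz : ℤ := ∑ l, ((b j l).toNat : ℤ) with hDz
    set Dy : ℤ := ∑ l, ((-(b j l)).toNat : ℤ) with hDy
    set Dx : ℤ := ∑ i, (m₁ j i : ℤ) * w i with hDx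
    refine ⟨Dz + Dy + Dx, ?_⟩
    have hm1 : IsWeightedHomogeneous W
        ((∏ l, X (Sum.inr (Sum.inr l)) ^ (b j l).toNat) *
          (∏ l, X (Sum.inr (Sum.inl l)) ^ (-(b j l)).toNat) *
          (∏ i, (X (Sum.inl i) : MvPolynomial (Fin n ⊕ (Fin r ⊕ Fin r)) k) ^ m₁ j i))
        (Dz + Dy + Dx) :=
      ((hprodz (fun l => (b j l).toNat)).mul (hprody (fun l => (-(b j l)).toNat))).mul
        (hprodx (m₁ j))
    have hm2 : IsWeightedHomogeneous W
        ((∏ l, X (Sum.inr (Sum.inr l)) ^ (-(b j l)).toNat) *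
          (∏ l, X (Sum.inr (Sum.inl l)) ^ (b j l).toNat) *
          (∏ i, (X (Sum.inl i) : MvPolynomial (Fin n ⊕ (Fin r ⊕ Fin r)) k) ^ nn j i))
        (Dz + Dy + Dx) := by
      have := ((hprodz (fun l => (-(b j l)).toNat)).mul (hprody (fun l => (b j l).toNat))).mul
        (hprodx (nn j))
      convert this using 1
      rw [key, hDz, hDy]
      ring
    exact (mem_weightedHomogeneousSubmodule k W _ _).mp
      (Submodule.sub_mem _ ((mem_weightedHomogeneousSubmodule k W _ _).mpr hm1)
        ((mem_weightedHomogeneousSubmodule k W _ _).mpr hm2))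
  · intro j
    exact ⟨∑ i, (m₀ j i : ℤ) * w i, hprodx (m₀ j)⟩
end

section
/- Let J = J₀ ⊔ J₁ be a finite index set, with m_j, n_j ∈ ℕ^n for j ∈ J₁ and m_j ∈ ℕ^n for j ∈ J₀, let b : J₁ → ℤ^r, and let λ ∈ (k^×)^r. Set I := ⟨x^{m_j} − x^{n_j} : j ∈ J₁⟩ + ⟨x^{m_j} : j ∈ J₀⟩ and I_λ := ⟨x^{m_j} − λ^{b_j}·x^{n_j} : j ∈ J₁⟩ + ⟨x^{m_j} : j ∈ J₀⟩. If I = I_λ and x^{n_j} ∉ I for every j ∈ J₁, then λ^{b_j} = 1 for every j ∈ J₁; in particular I_λ coincides with the family evaluated at the identity point (1,…,1). -/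
open MvPolynomial

/-- Set `I := ⟨x^{m_j} − x^{n_j} : j ∈ J₁⟩ + ⟨x^{m_j} : j ∈ J₀⟩` (the family at the
identity point) and `I_λ := ⟨x^{m_j} − λ^{b_j}·x^{n_j} : j ∈ J₁⟩ + ⟨x^{m_j} : j ∈ J₀⟩`.
If `I = I_λ` and `x^{n_j} ∉ I` for every `j ∈ J₁`, then `λ^{b_j} = 1` for every `j ∈ J₁`;
in particular `I_λ` coincides with the family evaluated at the identity point `(1,…,1)`. -/
theorem lambda_pow_eq_one_of_famIdeal_eq (k : Type*) [Field k] (n r : ℕ)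
    (J₀ J₁ : Type*) [Fintype J₀] [Fintype J₁]
    (m₁ nn : J₁ → Fin n → ℕ) (m₀ : J₀ → Fin n → ℕ) (b : J₁ → Fin r → ℤ)
    (lam : Fin r → kˣ)
    (hEq : famIdeal k n r m₁ nn m₀ b (fun _ => 1) = famIdeal k n r m₁ nn m₀ b lam)
    (hstd : ∀ j : J₁,
      (∏ i, (X i : MvPolynomial (Fin n) k) ^ nn j i) ∉
        famIdeal k n r m₁ nn m₀ b (fun _ => 1)) :
    (∀ j : J₁, (∏ l, lam l ^ b j l) = 1) ∧
      famIdeal k n r m₁ nn m₀ b lam = famIdeal k n r m₁ nn m₀ b (fun _ => 1) := by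
  refine ⟨fun j => ?_, hEq.symm⟩
  set I := famIdeal k n r m₁ nn m₀ b (fun _ => 1) with hI
  set c : k := ((∏ l, lam l ^ b j l : kˣ) : k) with hc
  -- generator at identity
  have h1 : ((∏ i, X i ^ m₁ j i) - C 1 * ∏ i, X i ^ nn j i : MvPolynomial (Fin n) k) ∈ I := by
    apply Ideal.subset_span
    left
    exact ⟨j, by simp⟩
  -- generator at lam
  have h2 : ((∏ i, X i ^ m₁ j i) - C c * ∏ i, X i ^ nn j i : MvPolynomial (Fin n) k) ∈ I := by
    rw [hEq]
    apply Ideal.subset_span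
    left
    exact ⟨j, rfl⟩
  have h3 : (C (c - 1) * ∏ i, X i ^ nn j i : MvPolynomial (Fin n) k) ∈ I := by
    have := I.sub_mem h1 h2
    have heq : ((∏ i, X i ^ m₁ j i) - C 1 * ∏ i, X i ^ nn j i)
        - ((∏ i, X i ^ m₁ j i) - C c * ∏ i, X i ^ nn j i)
        = (C (c - 1) * ∏ i, X i ^ nn j i : MvPolynomial (Fin n) k) := by
      rw [map_sub]; ring
    rwa [heq] at this
  by_contra hne
  have hc1 : c ≠ 1 := by
    intro h
    apply hne
    exact Units.ext (by simpa [hc] using h)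
  have hc0 : c - 1 ≠ 0 := sub_ne_zero.mpr hc1
  apply hstd j
  have := I.mul_mem_left (C (c - 1)⁻¹) h3
  rwa [← mul_assoc, ← map_mul, inv_mul_cancel₀ hc0, map_one, one_mul] at this
end
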